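/- Let X₁, X₂ ∈ ℤ^{Z_N} be nonnegative integer vectors and let (U₁, U₂) = (T̃(X₂,X₁), D̃(X₂,X₁)) be their zero-temperature periodic Pitman transform. Then U₁ and U₂ are nonnegative integer vectors, and applying the transform again returns (X₁, X₂); that is, the zero-temperature periodic Pitman transform restricts to an involution on (ℤ_{≥0}^{Z_N})². -/

import Mathlib

open Finset Real

variable {N : ℕ}

/-- Cyclic sum `Y_{[i,j]}` (closed-closed), going from `i` around to `j`. -/
noncomputable def cycCC [NeZero N] (Y : ZMod N → ℝ) (i j : ZMod N) : ℝ :=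
  ∑ ℓ ∈ Finset.range ((j - i).val + 1), Y (i + ℓ)

/-- Cyclic sum `Y_{(i,j]}` (open-closed), with `Y_{(i,i]} = 0`. -/
noncomputable def cycOC [NeZero N] (Y : ZMod N → ℝ) (i j : ZMod N) : ℝ :=
  ∑ ℓ ∈ Finset.range ((j - i).val), Y (i + 1 + ℓ)

/-- `Y_ℓ = X₂(ℓ+1) − X₁(ℓ)`. -/
noncomputable def Yv [NeZero N] (X₁ X₂ : ZMod N → ℝ) : ZMod N → ℝ :=
  fun ℓ => X₂ (ℓ + 1) - X₁ ℓ

/-- Positive-temperature periodic Pitman map `T`. -/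
noncomputable def Tmap [NeZero N] (X₁ X₂ : ZMod N → ℝ) (i : ZMod N) : ℝ :=
  X₁ (i - 1) + Real.log ((∑ j : ZMod N, Real.exp (cycCC (Yv X₁ X₂) (i - 1) j)) /
    (∑ j : ZMod N, Real.exp (cycCC (Yv X₁ X₂) i j)))

/-- Positive-temperature periodic Pitman map `D`. -/
noncomputable def Dmap [NeZero N] (X₁ X₂ : ZMod N → ℝ) (i : ZMod N) : ℝ :=
  X₂ (i + 1) + Real.log ((∑ j : ZMod N, Real.exp (cycOC (Yv X₁ X₂) i j)) /
    (∑ j : ZMod N, Real.exp (cycOC (Yv X₁ X₂) (i - 1) j)))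

/-- Zero-temperature periodic Pitman map `T̃`. -/
noncomputable def Tz [NeZero N] (X₁ X₂ : ZMod N → ℝ) (i : ZMod N) : ℝ :=
  X₁ (i - 1) + Finset.univ.sup' Finset.univ_nonempty (fun j => cycCC (Yv X₁ X₂) (i - 1) j)
    - Finset.univ.sup' Finset.univ_nonempty (fun j => cycCC (Yv X₁ X₂) i j)

/-- Zero-temperature periodic Pitman map `D̃`. -/
noncomputable def Dz [NeZero N] (X₁ X₂ : ZMod N → ℝ) (i : ZMod N) : ℝ :=
  X₂ (i + 1) + Finset.univ.sup' Finset.univ_nonempty (fun j => cycOC (Yv X₁ X₂) i j)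
    - Finset.univ.sup' Finset.univ_nonempty (fun j => cycOC (Yv X₁ X₂) (i - 1) j)

set_option linter.unusedSectionVars false
set_option linter.unusedVariables false
set_option linter.unnecessarySimpa false

section ZeroTempAux

variable [NeZero N]

lemma rangeN_nonempty : (Finset.range N).Nonempty :=
  ⟨0, Finset.mem_range.mpr (Nat.pos_of_ne_zero (NeZero.ne N))⟩

/-- Partial sums of the lift of `Z` to `ℕ`. -/
noncomputable def Fcum (Z : ZMod N → ℝ) (n : ℕ) : ℝ :=
  ∑ t ∈ Finset.range n, Z (t : ZMod N)

/-- Maximum of `Fcum Z` over the window `[m, m+N-1]`. -/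
noncomputable def Hwin (Z : ZMod N → ℝ) (m : ℕ) : ℝ :=
  (Finset.range N).sup' rangeN_nonempty (fun t => Fcum Z (m + t))

/-- Total sum of `Z` over one period. -/
noncomputable def Stot (Z : ZMod N → ℝ) : ℝ := ∑ j : ZMod N, Z j

lemma Fcum_succ (Z : ZMod N → ℝ) (n : ℕ) :
    Fcum Z (n + 1) = Fcum Z n + Z (n : ZMod N) := Finset.sum_range_succ _ _

lemma Fcum_add (Z : ZMod N → ℝ) (a v : ℕ) :
    Fcum Z (a + v) = Fcum Z a + ∑ ℓ ∈ Finset.range v, Z ((a + ℓ : ℕ) : ZMod N) := by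
  induction v with
  | zero => simp
  | succ v ih =>
      rw [← Nat.add_assoc, Fcum_succ, ih, Finset.sum_range_succ]
      push_cast
      ring

lemma sum_range_N (Z : ZMod N → ℝ) (a : ℕ) :
    ∑ ℓ ∈ Finset.range N, Z ((a + ℓ : ℕ) : ZMod N) = Stot Z := by
  unfold Stot
  apply Finset.sum_nbij' (i := fun ℓ => ((a + ℓ : ℕ) : ZMod N))
    (j := fun x => (x - (a : ZMod N)).val)
  · intro ℓ _; exact Finset.mem_univ _
  · intro x _; exact Finset.mem_range.mpr (ZMod.val_lt _)
  · intro ℓ hℓ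
    rw [Finset.mem_range] at hℓ
    push_cast
    rw [add_sub_cancel_left]
    exact ZMod.val_cast_of_lt hℓ
  · intro x _
    push_cast
    rw [ZMod.natCast_rightInverse (x - (a : ZMod N))]
    ring
  · intro ℓ _; rfl

lemma Fcum_period (Z : ZMod N → ℝ) (n : ℕ) :
    Fcum Z (n + N) = Fcum Z n + Stot Z := by
  rw [Fcum_add, sum_range_N]

lemma le_Hwin (Z : ZMod N → ℝ) {t : ℕ} (ht : t < N) (m : ℕ) :
    Fcum Z (m + t) ≤ Hwin Z m :=
  Finset.le_sup' (fun t => Fcum Z (m + t)) (Finset.mem_range.mpr ht)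

lemma sup'_add_c {ι : Type*} (s : Finset ι) (hs : s.Nonempty) (f : ι → ℝ) (c : ℝ) :
    s.sup' hs (fun x => f x + c) = s.sup' hs f + c := by
  apply le_antisymm
  · exact Finset.sup'_le _ _ fun b hb => by linarith [Finset.le_sup' f hb]
  · rw [← le_sub_iff_add_le]
    exact Finset.sup'_le _ _ fun b hb =>
      le_sub_iff_add_le.mpr (Finset.le_sup' (fun x => f x + c) hb)

lemma Hwin_period (Z : ZMod N → ℝ) (m : ℕ) :
    Hwin Z (m + N) = Hwin Z m + Stot Z := by
  unfold Hwin
  rw [← sup'_add_c]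
  apply Finset.sup'_congr _ rfl
  intro t _
  have : m + N + t = (m + t) + N := by omega
  rw [this, Fcum_period]

lemma sup_shift (Z : ZMod N → ℝ) (i : ZMod N) (n : ℕ) (hn : (n : ZMod N) = i) :
    Finset.univ.sup' Finset.univ_nonempty (fun j : ZMod N => Fcum Z (n + 1 + (j - i).val))
      = Hwin Z (n + 1) := by
  apply le_antisymm
  · exact Finset.sup'_le _ _ fun j _ => le_Hwin Z (ZMod.val_lt _) _
  · apply Finset.sup'_le _ _
    intro t ht
    rw [Finset.mem_range] at ht
    have hv : ((i + (t : ZMod N)) - i).val = t := by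
      rw [add_sub_cancel_left]
      exact ZMod.val_cast_of_lt ht
    have := Finset.le_sup' (f := fun j : ZMod N => Fcum Z (n + 1 + (j - i).val))
      (Finset.mem_univ (i + (t : ZMod N)))
    rwa [hv] at this

lemma sup_cycCC (Z : ZMod N → ℝ) (i : ZMod N) (n : ℕ) (hn : (n : ZMod N) = i) :
    Finset.univ.sup' Finset.univ_nonempty (fun j => cycCC Z i j)
      = Hwin Z (n + 1) - Fcum Z n := by
  have hterm : (fun j : ZMod N => cycCC Z i j)
      = fun j => Fcum Z (n + 1 + (j - i).val) + (-(Fcum Z n)) := by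
    funext j
    have hidx : n + 1 + (j - i).val = n + ((j - i).val + 1) := by omega
    rw [cycCC, hidx, Fcum_add]
    have : ∀ ℓ ∈ Finset.range ((j - i).val + 1),
        Z ((n + ℓ : ℕ) : ZMod N) = Z (i + (ℓ : ZMod N)) := by
      intro ℓ _
      congr 1
      push_cast [hn]
      ring
    rw [Finset.sum_congr rfl this]
    ring
  rw [hterm, sup'_add_c, sup_shift Z i n hn]
  ring

lemma sup_cycOC (Z : ZMod N → ℝ) (i : ZMod N) (n : ℕ) (hn : (n : ZMod N) = i) :
    Finset.univ.sup' Finset.univ_nonempty (fun j => cycOC Z i j)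
      = Hwin Z (n + 1) - Fcum Z (n + 1) := by
  have hterm : (fun j : ZMod N => cycOC Z i j)
      = fun j => Fcum Z (n + 1 + (j - i).val) + (-(Fcum Z (n + 1))) := by
    funext j
    rw [cycOC, Fcum_add]
    have : ∀ ℓ ∈ Finset.range ((j - i).val),
        Z ((n + 1 + ℓ : ℕ) : ZMod N) = Z (i + 1 + (ℓ : ZMod N)) := by
      intro ℓ _
      congr 1
      push_cast [hn]
      ring
    rw [Finset.sum_congr rfl this]
    ring
  rw [hterm, sup'_add_c, sup_shift Z i n hn]
  ring

lemma Tz_eq (A B : ZMod N → ℝ) (i : ZMod N) (n : ℕ) (hn1 : 1 ≤ n)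
    (hn : (n : ZMod N) = i) :
    Tz A B i = B i + Hwin (Yv A B) n - Hwin (Yv A B) (n + 1) := by
  set Z := Yv A B with hZ
  have h1 : ((n - 1 : ℕ) : ZMod N) = i - 1 := by
    rw [Nat.cast_sub hn1, hn, Nat.cast_one]
  have h2 : (n - 1) + 1 = n := Nat.sub_add_cancel hn1
  rw [Tz, sup_cycCC Z (i - 1) (n - 1) h1, sup_cycCC Z i n hn, h2]
  have hfe : Fcum Z n = Fcum Z (n - 1) + Z (i - 1) := by
    conv_lhs => rw [← h2]
    rw [Fcum_succ, h1]
  have hz : Z (i - 1) = B i - A (i - 1) := by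
    rw [hZ]
    show B (i - 1 + 1) - A (i - 1) = B i - A (i - 1)
    rw [sub_add_cancel]
  rw [hfe, hz]
  ring

lemma Dz_eq (A B : ZMod N → ℝ) (i : ZMod N) (n : ℕ) (hn1 : 1 ≤ n)
    (hn : (n : ZMod N) = i) :
    Dz A B i = A i + Hwin (Yv A B) (n + 1) - Hwin (Yv A B) n := by
  set Z := Yv A B with hZ
  have h1 : ((n - 1 : ℕ) : ZMod N) = i - 1 := by
    rw [Nat.cast_sub hn1, hn, Nat.cast_one]
  have h2 : (n - 1) + 1 = n := Nat.sub_add_cancel hn1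
  rw [Dz, sup_cycOC Z (i - 1) (n - 1) h1, sup_cycOC Z i n hn, h2]
  have hfe : Fcum Z (n + 1) = Fcum Z n + Z i := by
    rw [Fcum_succ, hn]
  have hz : Z i = B (i + 1) - A i := rfl
  rw [hfe, hz]
  ring

lemma keyA (Z : ZMod N → ℝ) (w t : ℕ) (ht : t < N) :
    Fcum Z (w + t) + (Hwin Z w + Stot Z) ≤ Hwin Z (w + t) + Hwin Z (w + t + 1) := by
  have hN : 0 < N := Nat.pos_of_ne_zero (NeZero.ne N)
  obtain ⟨s, hs, hseq⟩ := Finset.exists_mem_eq_sup' (rangeN_nonempty (N := N))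
    (fun u => Fcum Z (w + u))
  rw [Finset.mem_range] at hs
  have hseq' : Hwin Z w = Fcum Z (w + s) := hseq
  rcases le_or_gt t s with h | h
  · have h1 : Fcum Z (w + s) ≤ Hwin Z (w + t) := by
      have hidx : (w + t) + (s - t) = w + s := by omega
      have := le_Hwin Z (show s - t < N by omega) (w + t)
      rwa [hidx] at this
    have h2 : Fcum Z (w + t) + Stot Z ≤ Hwin Z (w + t + 1) := by
      have hidx : (w + t + 1) + (N - 1) = (w + t) + N := by omega
      have := le_Hwin Z (show N - 1 < N by omega) (w + t + 1)
      rwa [hidx, Fcum_period] at this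
    linarith
  · have h1 : Fcum Z (w + t) ≤ Hwin Z (w + t) := by
      have := le_Hwin Z hN (w + t)
      simpa using this
    have h2 : Fcum Z (w + s) + Stot Z ≤ Hwin Z (w + t + 1) := by
      have hidx : (w + t + 1) + (s + N - (t + 1)) = (w + s) + N := by omega
      have hlt : s + N - (t + 1) < N := by omega
      have := le_Hwin Z hlt (w + t + 1)
      rwa [hidx, Fcum_period] at this
    linarith

lemma keyB (Z : ZMod N → ℝ) (w : ℕ) :
    ∃ t, t < N ∧ Hwin Z (w + t) + Hwin Z (w + t + 1) ≤ Fcum Z (w + t) + (Hwin Z w + Stot Z) := by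
  classical
  have hN : 0 < N := Nat.pos_of_ne_zero (NeZero.ne N)
  obtain ⟨s, hs, hseq⟩ := Finset.exists_mem_eq_sup' (rangeN_nonempty (N := N))
    (fun u => Fcum Z (w + u))
  rw [Finset.mem_range] at hs
  have hseq' : Hwin Z w = Fcum Z (w + s) := hseq
  rcases le_total (Stot Z) 0 with hS | hS
  · set T := (Finset.range N).filter (fun t => Hwin Z w + Stot Z ≤ Fcum Z (w + t)) with hTdef
    have hTne : T.Nonempty :=
      ⟨s, Finset.mem_filter.mpr ⟨Finset.mem_range.mpr hs, by rw [← hseq']; linarith⟩⟩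
    set t₀ := T.max' hTne with ht₀def
    have ht₀mem := T.max'_mem hTne
    rw [Finset.mem_filter, Finset.mem_range] at ht₀mem
    obtain ⟨ht₀N, ht₀F⟩ := ht₀mem
    refine ⟨t₀, ht₀N, ?_⟩
    have hA : Hwin Z (w + t₀) ≤ Fcum Z (w + t₀) := by
      apply Finset.sup'_le
      intro k hk
      rw [Finset.mem_range] at hk
      rcases Nat.lt_or_ge (t₀ + k) N with hu | hu
      · rcases Nat.eq_zero_or_pos k with rfl | hkpos
        · simp
        · have hnotT : t₀ + k ∉ T := by
            intro hmem
            exact absurd (Finset.le_max' T _ hmem) (by omega)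
          have hlt : Fcum Z (w + (t₀ + k)) < Hwin Z w + Stot Z := by
            by_contra hc
            push_neg at hc
            exact hnotT (Finset.mem_filter.mpr ⟨Finset.mem_range.mpr hu, hc⟩)
          have hidx : w + t₀ + k = w + (t₀ + k) := by omega
          rw [hidx]
          linarith
      · have hidx : w + t₀ + k = (w + (t₀ + k - N)) + N := by omega
        have hlt : t₀ + k - N < N := by omega
        have h5 := le_Hwin Z hlt w
        rw [hidx, Fcum_period]
        linarith
    have hB : Hwin Z (w + t₀ + 1) ≤ Hwin Z w + Stot Z := by
      apply Finset.sup'_le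
      intro k hk
      rw [Finset.mem_range] at hk
      rcases Nat.lt_or_ge (t₀ + 1 + k) N with hu | hu
      · have hnotT : t₀ + 1 + k ∉ T := by
          intro hmem
          exact absurd (Finset.le_max' T _ hmem) (by omega)
        have hlt : Fcum Z (w + (t₀ + 1 + k)) < Hwin Z w + Stot Z := by
          by_contra hc
          push_neg at hc
          exact hnotT (Finset.mem_filter.mpr ⟨Finset.mem_range.mpr hu, hc⟩)
        have hidx : w + t₀ + 1 + k = w + (t₀ + 1 + k) := by omega
        rw [hidx]
        linarith
      · have hidx : w + t₀ + 1 + k = (w + (t₀ + 1 + k - N)) + N := by omega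
        have hlt : t₀ + 1 + k - N < N := by omega
        have h5 := le_Hwin Z hlt w
        rw [hidx, Fcum_period]
        linarith
    linarith
  · set T := (Finset.range N).filter (fun t => Hwin Z w ≤ Fcum Z (w + t) + Stot Z) with hTdef
    have hTne : T.Nonempty :=
      ⟨s, Finset.mem_filter.mpr ⟨Finset.mem_range.mpr hs, by rw [hseq']; linarith⟩⟩
    set t₀ := T.min' hTne with ht₀def
    have ht₀mem := T.min'_mem hTne
    rw [Finset.mem_filter, Finset.mem_range] at ht₀mem
    obtain ⟨ht₀N, ht₀F⟩ := ht₀mem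
    refine ⟨t₀, ht₀N, ?_⟩
    have hA : Hwin Z (w + t₀) ≤ Hwin Z w := by
      apply Finset.sup'_le
      intro k hk
      rw [Finset.mem_range] at hk
      rcases Nat.lt_or_ge (t₀ + k) N with hu | hu
      · have hidx : w + t₀ + k = w + (t₀ + k) := by omega
        rw [hidx]
        exact le_Hwin Z hu w
      · have hnotT : t₀ + k - N ∉ T := by
          intro hmem
          exact absurd (Finset.min'_le T _ hmem) (by omega)
        have hlt : Fcum Z (w + (t₀ + k - N)) + Stot Z < Hwin Z w := by
          by_contra hc
          push_neg at hc
          exact hnotT (Finset.mem_filter.mpr ⟨Finset.mem_range.mpr (by omega), hc⟩)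
        have hidx : w + t₀ + k = (w + (t₀ + k - N)) + N := by omega
        rw [hidx, Fcum_period]
        linarith
    have hB : Hwin Z (w + t₀ + 1) ≤ Fcum Z (w + t₀) + Stot Z := by
      apply Finset.sup'_le
      intro k hk
      rw [Finset.mem_range] at hk
      rcases Nat.lt_or_ge (t₀ + 1 + k) N with hu | hu
      · have hidx : w + t₀ + 1 + k = w + (t₀ + 1 + k) := by omega
        rw [hidx]
        have := le_Hwin Z hu w
        linarith
      · have hu2 : t₀ + 1 + k - N ≤ t₀ := by omega
        rcases eq_or_lt_of_le hu2 with heq | hlt2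
        · have hidx : w + t₀ + 1 + k = (w + t₀) + N := by omega
          rw [hidx, Fcum_period]
        · have hnotT : t₀ + 1 + k - N ∉ T := by
            intro hmem
            exact absurd (Finset.min'_le T _ hmem) (by omega)
          have hlt : Fcum Z (w + (t₀ + 1 + k - N)) + Stot Z < Hwin Z w := by
            by_contra hc
            push_neg at hc
            exact hnotT (Finset.mem_filter.mpr ⟨Finset.mem_range.mpr (by omega), hc⟩)
          have hidx : w + t₀ + 1 + k = (w + (t₀ + 1 + k - N)) + N := by omega
          rw [hidx, Fcum_period]
          linarith
    linarith

lemma Yv_TD (A B : ZMod N → ℝ) (t : ℕ) :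
    Yv (Dz A B) (Tz A B) ((t : ZMod N))
      = Yv A B ((t : ZMod N)) + Hwin (Yv A B) (t + N) - Hwin (Yv A B) (t + N + 2) := by
  have hN : 0 < N := Nat.pos_of_ne_zero (NeZero.ne N)
  have hc1 : ((t + N + 1 : ℕ) : ZMod N) = (t : ZMod N) + 1 := by
    push_cast [ZMod.natCast_self]
    ring
  have hc2 : ((t + N : ℕ) : ZMod N) = (t : ZMod N) := by
    push_cast [ZMod.natCast_self]
    ring
  have h1 := Tz_eq A B ((t : ZMod N) + 1) (t + N + 1) (by omega) hc1
  have h2 := Dz_eq A B (t : ZMod N) (t + N) (by omega) hc2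
  show Tz A B ((t : ZMod N) + 1) - Dz A B (t : ZMod N) = _
  rw [h1, h2]
  have h3 : t + N + 1 + 1 = t + N + 2 := by omega
  rw [h3]
  show B ((t : ZMod N) + 1) + _ - _ - _ = _
  have h4 : Yv A B ((t : ZMod N)) = B ((t : ZMod N) + 1) - A ((t : ZMod N)) := rfl
  rw [h4]
  ring

lemma Fcum_TD (A B : ZMod N → ℝ) (u : ℕ) :
    Fcum (Yv (Dz A B) (Tz A B)) u
      = Fcum (Yv A B) u + (Hwin (Yv A B) N + Hwin (Yv A B) (N + 1))
        - Hwin (Yv A B) (u + N) - Hwin (Yv A B) (u + N + 1) := by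
  induction u with
  | zero =>
      simp only [Fcum, Finset.range_zero, Finset.sum_empty, Nat.zero_add]
      ring
  | succ u ih =>
      rw [Fcum_succ, ih, Yv_TD A B u, Fcum_succ]
      have e1 : u + 1 + N = u + N + 1 := by omega
      rw [e1]
      have e2 : u + N + 1 + 1 = u + N + 2 := by omega
      rw [e2]
      ring

lemma Hwin_TD (A B : ZMod N → ℝ) (m : ℕ) :
    Hwin (Yv (Dz A B) (Tz A B)) m
      = (Hwin (Yv A B) N + Hwin (Yv A B) (N + 1) - Stot (Yv A B) - Stot (Yv A B))
        - Hwin (Yv A B) (m + N) := by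
  set Z := Yv A B with hZ
  apply le_antisymm
  · apply Finset.sup'_le
    intro t ht
    rw [Finset.mem_range] at ht
    rw [Fcum_TD]
    have hk := keyA Z (m + N) t ht
    have hp : Fcum Z (m + N + t) = Fcum Z (m + t) + Stot Z := by
      have hidx : m + N + t = (m + t) + N := by omega
      rw [hidx, Fcum_period]
    have e1 : m + N + t = m + t + N := by omega
    rw [e1] at hp
    rw [e1] at hk
    linarith
  · obtain ⟨t, ht, hk⟩ := keyB Z (m + N)
    have hmem : Fcum (Yv (Dz A B) (Tz A B)) (m + t) ≤ Hwin (Yv (Dz A B) (Tz A B)) m :=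
      le_Hwin _ ht m
    rw [Fcum_TD] at hmem
    have hp : Fcum Z (m + N + t) = Fcum Z (m + t) + Stot Z := by
      have hidx : m + N + t = (m + t) + N := by omega
      rw [hidx, Fcum_period]
    have e1 : m + N + t = m + t + N := by omega
    rw [e1] at hp
    rw [e1] at hk
    linarith

lemma lift_cast (i : ZMod N) : ((i.val + N : ℕ) : ZMod N) = i := by
  push_cast [ZMod.natCast_self]
  simpa using ZMod.natCast_rightInverse i

lemma Tz_nonneg (A B : ZMod N → ℝ) (hA : ∀ ℓ, 0 ≤ A ℓ) (hB : ∀ ℓ, 0 ≤ B ℓ)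
    (i : ZMod N) : 0 ≤ Tz A B i := by
  have hN : 0 < N := Nat.pos_of_ne_zero (NeZero.ne N)
  set n := i.val + N with hndef
  have hn : ((n : ℕ) : ZMod N) = i := lift_cast i
  rw [Tz_eq A B i n (by omega) hn]
  set Z := Yv A B with hZ
  have hsup : Hwin Z (n + 1) ≤ B i + Hwin Z n := by
    apply Finset.sup'_le
    intro k hk
    rw [Finset.mem_range] at hk
    rcases Nat.lt_or_ge (k + 1) N with hu | hu
    · have hidx : n + 1 + k = n + (k + 1) := by omega
      rw [hidx]
      have := le_Hwin Z hu n
      linarith [hB i]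
    · have hidx : n + 1 + k = (n + (N - 1)) + 1 := by omega
      rw [hidx, Fcum_succ]
      have hcast : ((n + (N - 1) : ℕ) : ZMod N) = i - 1 := by
        rw [Nat.cast_add, Nat.cast_sub (by omega : 1 ≤ N), ZMod.natCast_self, hn, Nat.cast_one]
        ring
      rw [hcast]
      have h1 := le_Hwin Z (show N - 1 < N by omega) n
      have h2 : Z (i - 1) = B (i - 1 + 1) - A (i - 1) := rfl
      have h3 : i - 1 + 1 = i := by ring
      rw [h3] at h2
      linarith [hA (i - 1), hB i]
  linarith

lemma Dz_nonneg (A B : ZMod N → ℝ) (hA : ∀ ℓ, 0 ≤ A ℓ) (hB : ∀ ℓ, 0 ≤ B ℓ)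
    (i : ZMod N) : 0 ≤ Dz A B i := by
  have hN : 0 < N := Nat.pos_of_ne_zero (NeZero.ne N)
  set n := i.val + N with hndef
  have hn : ((n : ℕ) : ZMod N) = i := lift_cast i
  rw [Dz_eq A B i n (by omega) hn]
  set Z := Yv A B with hZ
  have hsup : Hwin Z n ≤ A i + Hwin Z (n + 1) := by
    apply Finset.sup'_le
    intro k hk
    rw [Finset.mem_range] at hk
    rcases Nat.eq_zero_or_pos k with rfl | hkpos
    · have h2 : Fcum Z (n + 1) = Fcum Z n + Z i := by rw [Fcum_succ, hn]
      have h3 : Z i = B (i + 1) - A i := rfl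
      have h4 := le_Hwin Z hN (n + 1)
      have h5 : n + 1 + 0 = n + 1 := by omega
      rw [h5] at h4
      have h6 : n + 0 = n := by omega
      rw [h6]
      linarith [hB (i + 1)]
    · have hidx : n + k = (n + 1) + (k - 1) := by omega
      rw [hidx]
      have := le_Hwin Z (show k - 1 < N by omega) (n + 1)
      linarith [hA i]
  linarith

lemma Hwin_int (Z : ZMod N → ℝ) (g : ZMod N → ℤ) (hg : ∀ ℓ : ZMod N, Z ℓ = (g ℓ : ℝ))
    (m : ℕ) : ∃ z : ℤ, Hwin Z m = (z : ℝ) := by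
  obtain ⟨t, ht, heq⟩ := Finset.exists_mem_eq_sup' (rangeN_nonempty (N := N))
    (fun t => Fcum Z (m + t))
  refine ⟨∑ ℓ ∈ Finset.range (m + t), g ((ℓ : ℕ) : ZMod N), ?_⟩
  have h2 : Hwin Z m = Fcum Z (m + t) := heq
  rw [h2, Fcum, Finset.sum_congr rfl (fun ℓ _ => hg _)]
  push_cast
  rfl

end ZeroTempAux

/-- The zero-temperature periodic Pitman transform
`(X₁,X₂) ↦ (T̃(X₂,X₁), D̃(X₂,X₁))` restricts to an involution on pairs of
nonnegative integer vectors. -/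
theorem zero_temp_pitman_involution_nonneg_int [NeZero N] (X₁ X₂ : ZMod N → ℕ) :
    (∀ i, ∃ n : ℕ, Tz (fun ℓ => (X₂ ℓ : ℝ)) (fun ℓ => (X₁ ℓ : ℝ)) i = n) ∧
    (∀ i, ∃ n : ℕ, Dz (fun ℓ => (X₂ ℓ : ℝ)) (fun ℓ => (X₁ ℓ : ℝ)) i = n) ∧
    Tz (Dz (fun ℓ => (X₂ ℓ : ℝ)) (fun ℓ => (X₁ ℓ : ℝ)))
       (Tz (fun ℓ => (X₂ ℓ : ℝ)) (fun ℓ => (X₁ ℓ : ℝ))) = (fun ℓ => (X₁ ℓ : ℝ)) ∧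
    Dz (Dz (fun ℓ => (X₂ ℓ : ℝ)) (fun ℓ => (X₁ ℓ : ℝ)))
       (Tz (fun ℓ => (X₂ ℓ : ℝ)) (fun ℓ => (X₁ ℓ : ℝ))) = (fun ℓ => (X₂ ℓ : ℝ)) := by
  have hN : 0 < N := Nat.pos_of_ne_zero (NeZero.ne N)
  set A : ZMod N → ℝ := fun ℓ => (X₂ ℓ : ℝ) with hAdef
  set B : ZMod N → ℝ := fun ℓ => (X₁ ℓ : ℝ) with hBdef
  have hA : ∀ ℓ, 0 ≤ A ℓ := fun ℓ => Nat.cast_nonneg _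
  have hB : ∀ ℓ, 0 ≤ B ℓ := fun ℓ => Nat.cast_nonneg _
  set g : ZMod N → ℤ := fun ℓ => (X₁ (ℓ + 1) : ℤ) - (X₂ ℓ : ℤ) with hgdef
  have hg : ∀ ℓ : ZMod N, Yv A B ℓ = (g ℓ : ℝ) := by
    intro ℓ
    simp only [Yv, hAdef, hBdef, hgdef]
    push_cast
    ring
  refine ⟨?_, ?_, ?_, ?_⟩
  · intro i
    set n := i.val + N with hndef
    have hn : ((n : ℕ) : ZMod N) = i := lift_cast i
    have hTz := Tz_eq A B i n (by omega) hn
    obtain ⟨z₁, h₁⟩ := Hwin_int (Yv A B) g hg n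
    obtain ⟨z₂, h₂⟩ := Hwin_int (Yv A B) g hg (n + 1)
    have hnn := Tz_nonneg A B hA hB i
    have hval : Tz A B i = (((X₁ i : ℤ) + z₁ - z₂ : ℤ) : ℝ) := by
      rw [hTz, h₁, h₂]
      simp only [hBdef]
      push_cast
      ring
    have h0 : (0 : ℤ) ≤ (X₁ i : ℤ) + z₁ - z₂ := by
      have h0' : (0 : ℝ) ≤ (((X₁ i : ℤ) + z₁ - z₂ : ℤ) : ℝ) := hval ▸ hnn
      exact_mod_cast h0'
    refine ⟨((X₁ i : ℤ) + z₁ - z₂).toNat, ?_⟩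
    rw [hval]
    exact_mod_cast (Int.toNat_of_nonneg h0).symm
  · intro i
    set n := i.val + N with hndef
    have hn : ((n : ℕ) : ZMod N) = i := lift_cast i
    have hDz := Dz_eq A B i n (by omega) hn
    obtain ⟨z₁, h₁⟩ := Hwin_int (Yv A B) g hg n
    obtain ⟨z₂, h₂⟩ := Hwin_int (Yv A B) g hg (n + 1)
    have hnn := Dz_nonneg A B hA hB i
    have hval : Dz A B i = (((X₂ i : ℤ) + z₂ - z₁ : ℤ) : ℝ) := by
      rw [hDz, h₁, h₂]
      simp only [hAdef]
      push_cast
      ring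
    have h0 : (0 : ℤ) ≤ (X₂ i : ℤ) + z₂ - z₁ := by
      have h0' : (0 : ℝ) ≤ (((X₂ i : ℤ) + z₂ - z₁ : ℤ) : ℝ) := hval ▸ hnn
      exact_mod_cast h0'
    refine ⟨((X₂ i : ℤ) + z₂ - z₁).toNat, ?_⟩
    rw [hval]
    exact_mod_cast (Int.toNat_of_nonneg h0).symm
  · funext i
    set n := i.val + N with hndef
    have hn : ((n : ℕ) : ZMod N) = i := lift_cast i
    have h1 := Tz_eq A B i n (by omega) hn
    have hT2 := Tz_eq (Dz A B) (Tz A B) i n (by omega) hn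
    rw [hT2, Hwin_TD A B n, Hwin_TD A B (n + 1), Hwin_period (Yv A B) n,
      Hwin_period (Yv A B) (n + 1), h1]
    show B i + _ - _ + _ - _ = B i
    ring
  · funext i
    set n := i.val + N with hndef
    have hn : ((n : ℕ) : ZMod N) = i := lift_cast i
    have h2 := Dz_eq A B i n (by omega) hn
    have hD2 := Dz_eq (Dz A B) (Tz A B) i n (by omega) hn
    rw [hD2, Hwin_TD A B n, Hwin_TD A B (n + 1), Hwin_period (Yv A B) n,
      Hwin_period (Yv A B) (n + 1), h2]
    show A i + _ - _ + _ - _ = A i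
    ring
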